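/- There do not exist continuous functions φ_1, φ_2, φ_3 : ℝ^3 → ℝ such that xyz = φ_1(x,y,z)·x² + φ_2(x,y,z)·y² + φ_3(x,y,z)·xyz² for all (x,y,z) ∈ ℝ^3. -/

import Mathlib

open Filter Topology

/-- Hochster's example: `xyz` cannot be written as
`φ₁·x² + φ₂·y² + φ₃·xyz²` with `φ₁, φ₂, φ₃` continuous on `ℝ³`. -/
theorem statement3 :
    ¬ ∃ φ₁ φ₂ φ₃ : ℝ × ℝ × ℝ → ℝ,
      Continuous φ₁ ∧ Continuous φ₂ ∧ Continuous φ₃ ∧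
      ∀ x y z : ℝ, x * y * z =
        φ₁ (x, y, z) * x ^ 2 + φ₂ (x, y, z) * y ^ 2 + φ₃ (x, y, z) * (x * y * z ^ 2) := by
  rintro ⟨φ₁, φ₂, φ₃, c₁, c₂, c₃, h⟩
  have key : ∀ c : ℝ, φ₃ (0, 0, c) * c ^ 2 = c := by
    intro c
    set g : ℝ → ℝ := fun t => φ₁ (t, t, c) + φ₂ (t, t, c) + φ₃ (t, t, c) * c ^ 2 with hg
    set g' : ℝ → ℝ := fun t => φ₁ (t, -t, c) + φ₂ (t, -t, c) - φ₃ (t, -t, c) * c ^ 2 with hg'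
    have cg : Continuous g := by fun_prop
    have cg' : Continuous g' := by fun_prop
    have hgval : ∀ t : ℝ, t ≠ 0 → g t = c := by
      intro t ht
      have ht2 : t ^ 2 ≠ 0 := pow_ne_zero 2 ht
      have := h t t c
      have h2 : g t * t ^ 2 = c * t ^ 2 := by simp only [hg]; nlinarith [this]
      exact mul_right_cancel₀ ht2 h2
    have hgval' : ∀ t : ℝ, t ≠ 0 → g' t = -c := by
      intro t ht
      have ht2 : t ^ 2 ≠ 0 := pow_ne_zero 2 ht
      have := h t (-t) c
      have h2 : g' t * t ^ 2 = -c * t ^ 2 := by simp only [hg']; nlinarith [this]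
      exact mul_right_cancel₀ ht2 h2
    have lim1 : Tendsto g (𝓝[≠] (0 : ℝ)) (𝓝 (g 0)) :=
      (cg.tendsto 0).mono_left nhdsWithin_le_nhds
    have lim1' : Tendsto g (𝓝[≠] (0 : ℝ)) (𝓝 c) := by
      refine Tendsto.congr' ?_ tendsto_const_nhds
      filter_upwards [self_mem_nhdsWithin] with t ht
      exact (hgval t ht).symm
    have lim2 : Tendsto g' (𝓝[≠] (0 : ℝ)) (𝓝 (g' 0)) :=
      (cg'.tendsto 0).mono_left nhdsWithin_le_nhds
    have lim2' : Tendsto g' (𝓝[≠] (0 : ℝ)) (𝓝 (-c)) := by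
      refine Tendsto.congr' ?_ tendsto_const_nhds
      filter_upwards [self_mem_nhdsWithin] with t ht
      exact (hgval' t ht).symm
    have e1 : g 0 = c := tendsto_nhds_unique lim1 lim1'
    have e2 : g' 0 = -c := tendsto_nhds_unique lim2 lim2'
    simp only [hg, hg', neg_zero] at e1 e2
    linarith
  -- Now φ₃ (0,0,c) = 1/c for c ≠ 0, contradicting continuity at 0.
  set F : ℝ → ℝ := fun c => φ₃ (0, 0, c) with hF
  have cF : Continuous F := by fun_prop
  have hFinv : ∀ᶠ c in 𝓝[>] (0 : ℝ), c⁻¹ = F c := by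
    filter_upwards [self_mem_nhdsWithin] with c hc
    have hc0 : c ≠ 0 := ne_of_gt hc
    have h2 : (φ₃ (0, 0, c) * c) * c = 1 * c := by linear_combination key c
    have h3 : φ₃ (0, 0, c) * c = 1 := mul_right_cancel₀ hc0 h2
    field_simp [hF]
    linarith [h3]
  have hTop : Tendsto F (𝓝[>] (0 : ℝ)) atTop :=
    tendsto_inv_nhdsGT_zero.congr' hFinv
  have hnhds : Tendsto F (𝓝[>] (0 : ℝ)) (𝓝 (F 0)) :=
    (cF.tendsto 0).mono_left nhdsWithin_le_nhds
  exact not_tendsto_nhds_of_tendsto_atTop hTop (F 0) hnhds
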